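/- Let Γ be the presented group with generators g, h, f and relations h g h⁻¹ = g⁻¹, h f h⁻¹ = f⁻¹, and g f = f g. Then the subgroup of Γ generated by the set {g, h², f} is isomorphic to ℤ × ℤ × ℤ (the free abelian group of rank 3). -/

import Mathlib

/-- The relator set of the presented group
`Γ = ⟨g, h, f | h g h⁻¹ = g⁻¹, h f h⁻¹ = f⁻¹, g f = f g⟩`,
the fundamental group of the spherical tangent bundle of the Klein bottle.
Generator `0` is `g`, generator `1` is `h`, generator `2` is `f`. -/
def kleinSTRels : Set (FreeGroup (Fin 3)) :=
  { FreeGroup.of 1 * FreeGroup.of 0 * (FreeGroup.of 1)⁻¹ * FreeGroup.of 0,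
    FreeGroup.of 1 * FreeGroup.of 2 * (FreeGroup.of 1)⁻¹ * FreeGroup.of 2,
    FreeGroup.of 0 * FreeGroup.of 2 * (FreeGroup.of 0)⁻¹ * (FreeGroup.of 2)⁻¹ }

/-- The presented group `⟨g, h, f | h g h⁻¹ = g⁻¹, h f h⁻¹ = f⁻¹, g f = f g⟩`. -/
abbrev KleinST : Type := PresentedGroup kleinSTRels

def KleinST.g : KleinST := PresentedGroup.of 0
def KleinST.h : KleinST := PresentedGroup.of 1
def KleinST.f : KleinST := PresentedGroup.of 2

open Multiplicative SemidirectProduct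

namespace KleinSTAux

lemma rel_holds (r : FreeGroup (Fin 3)) (hr : r ∈ kleinSTRels) :
    (QuotientGroup.mk r : KleinST) = 1 :=
  (QuotientGroup.eq_one_iff r).mpr (Subgroup.subset_normalClosure hr)

lemma rel1 : KleinST.h * KleinST.g * KleinST.h⁻¹ * KleinST.g = 1 := by
  have := rel_holds _ (Or.inl rfl)
  exact this

lemma rel2 : KleinST.h * KleinST.f * KleinST.h⁻¹ * KleinST.f = 1 := by
  have := rel_holds _ (Or.inr (Or.inl rfl))
  exact this

lemma rel3 : KleinST.g * KleinST.f * KleinST.g⁻¹ * KleinST.f⁻¹ = 1 := by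
  have := rel_holds _ (Or.inr (Or.inr rfl))
  exact this

lemma comm_gf : Commute KleinST.g KleinST.f := by
  have h3 : KleinST.g * KleinST.f * KleinST.g⁻¹ = KleinST.f⁻¹⁻¹ :=
    mul_eq_one_iff_eq_inv.mp rel3
  rw [inv_inv, mul_inv_eq_iff_eq_mul] at h3
  exact h3

lemma hg : KleinST.h * KleinST.g * KleinST.h⁻¹ = KleinST.g⁻¹ :=
  mul_eq_one_iff_eq_inv.mp rel1

lemma hf : KleinST.h * KleinST.f * KleinST.h⁻¹ = KleinST.f⁻¹ :=
  mul_eq_one_iff_eq_inv.mp rel2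

lemma comm_aux {a : KleinST} (h1 : KleinST.h * a * KleinST.h⁻¹ = a⁻¹) :
    Commute a (KleinST.h ^ 2) := by
  have e1 : KleinST.h * a = a⁻¹ * KleinST.h := by
    rwa [mul_inv_eq_iff_eq_mul] at h1
  have h1' : KleinST.h * a⁻¹ * KleinST.h⁻¹ = a := by
    have := congrArg Inv.inv h1
    simpa [mul_assoc] using this
  have e2 : KleinST.h * a⁻¹ = a * KleinST.h := by
    rwa [mul_inv_eq_iff_eq_mul] at h1'
  have : KleinST.h ^ 2 * a = a * KleinST.h ^ 2 := by
    calc KleinST.h ^ 2 * a = KleinST.h * (KleinST.h * a) := by rw [sq, mul_assoc]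
      _ = KleinST.h * a⁻¹ * KleinST.h := by rw [e1, mul_assoc]
      _ = a * KleinST.h * KleinST.h := by rw [e2]
      _ = a * KleinST.h ^ 2 := by rw [sq, mul_assoc]
  exact this.symm

lemma comm_gh2 : Commute KleinST.g (KleinST.h ^ 2) := comm_aux hg
lemma comm_fh2 : Commute KleinST.f (KleinST.h ^ 2) := comm_aux hf

end KleinSTAux



namespace KleinSTAux

abbrev Z2 := Multiplicative (ℤ × ℤ)

def φAct : Multiplicative ℤ →* MulAut Z2 := zpowersHom _ (MulEquiv.inv Z2)

abbrev GG := SemidirectProduct Z2 (Multiplicative ℤ) φAct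

def gen : Fin 3 → GG :=
  ![inl (ofAdd ((1:ℤ), (0:ℤ))), inr (ofAdd (1:ℤ)), inl (ofAdd ((0:ℤ), (1:ℤ)))]

lemma φAct_one_apply (n : Z2) : φAct (ofAdd (1:ℤ)) n = n⁻¹ := by
  show ((MulEquiv.inv Z2) ^ (1:ℤ)) n = n⁻¹
  rw [zpow_one]
  rfl

lemma φAct_even (b : ℤ) (n : Z2) : φAct (ofAdd (2 * b)) n = n := by
  show ((MulEquiv.inv Z2) ^ (2 * b)) n = n
  rw [zpow_mul]
  have h2 : (MulEquiv.inv Z2) ^ (2:ℤ) = 1 := by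
    rw [zpow_two]
    ext x <;> simp
  rw [h2, one_zpow]
  rfl

lemma GGrel (n : Z2) :
    inr (ofAdd (1:ℤ)) * inl n * inr ((ofAdd (1:ℤ))⁻¹) * inl n = (1 : GG) := by
  have h1 := (inl_aut (φ := φAct) (ofAdd (1:ℤ)) n).symm
  rw [h1, ← map_mul, φAct_one_apply, inv_mul_cancel, map_one]

lemma relcheck : ∀ r ∈ kleinSTRels, FreeGroup.lift gen r = 1 := by
  intro r hr
  rcases hr with h1 | h2 | h3
  · subst h1
    simp only [map_mul, map_inv, FreeGroup.lift_apply_of, gen, Matrix.cons_val_zero,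
      Matrix.cons_val_one, Matrix.head_cons]
    rw [← map_inv]
    exact GGrel _
  · subst h2
    simp only [map_mul, map_inv, FreeGroup.lift_apply_of, gen, Matrix.cons_val_one,
      Matrix.cons_val_two, Matrix.cons_val_zero, Matrix.tail_cons, Matrix.head_cons]
    rw [← map_inv]
    exact GGrel _
  · subst h3
    simp only [map_mul, map_inv, FreeGroup.lift_apply_of, gen, Matrix.cons_val_zero,
      Matrix.cons_val_two, Matrix.tail_cons, Matrix.head_cons]
    rw [← map_inv (inl : Z2 →* GG), ← map_inv (inl : Z2 →* GG),
      ← map_mul (inl : Z2 →* GG), ← map_mul (inl : Z2 →* GG), ← map_mul (inl : Z2 →* GG)]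
    have hpq : ofAdd ((1:ℤ),(0:ℤ)) * ofAdd ((0:ℤ),(1:ℤ)) * (ofAdd ((1:ℤ),(0:ℤ)))⁻¹ *
        (ofAdd ((0:ℤ),(1:ℤ)))⁻¹ = (1 : Z2) := by
      rw [mul_inv_eq_iff_eq_mul, one_mul, mul_inv_eq_iff_eq_mul]
      exact mul_comm _ _
    rw [hpq, map_one]

noncomputable def Φ : KleinST →* GG := PresentedGroup.toGroup relcheck

lemma Φg : Φ KleinST.g = inl (ofAdd ((1:ℤ), (0:ℤ))) := PresentedGroup.toGroup.of relcheck
lemma Φh : Φ KleinST.h = inr (ofAdd (1:ℤ)) := PresentedGroup.toGroup.of relcheck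
lemma Φf : Φ KleinST.f = inl (ofAdd ((0:ℤ), (1:ℤ))) := PresentedGroup.toGroup.of relcheck

def σ : Multiplicative (ℤ × ℤ × ℤ) →* KleinST :=
  ((zpowersHom KleinST KleinST.g).noncommCoprod
    (((zpowersHom KleinST (KleinST.h ^ 2)).noncommCoprod (zpowersHom KleinST KleinST.f)
        (fun m n => (comm_fh2.symm).zpow_zpow _ _)).comp
      (MulEquiv.prodMultiplicative ℤ ℤ).toMonoidHom)
    (fun m n => by
      simp only [MonoidHom.comp_apply, MonoidHom.noncommCoprod_apply, zpowersHom_apply]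
      exact ((comm_gh2.zpow_zpow _ _).mul_right (comm_gf.zpow_zpow _ _)))).comp
    (MulEquiv.prodMultiplicative ℤ (ℤ × ℤ)).toMonoidHom

lemma σ_apply (a b c : ℤ) :
    σ (ofAdd (a, b, c)) = KleinST.g ^ a * ((KleinST.h ^ 2) ^ b * KleinST.f ^ c) := by
  rfl

lemma σ_e1 : σ (ofAdd ((1:ℤ), (0:ℤ), (0:ℤ))) = KleinST.g := by
  rw [σ_apply]; simp

lemma σ_e2 : σ (ofAdd ((0:ℤ), (1:ℤ), (0:ℤ))) = KleinST.h ^ 2 := by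
  rw [σ_apply]; simp

lemma σ_e3 : σ (ofAdd ((0:ℤ), (0:ℤ), (1:ℤ))) = KleinST.f := by
  rw [σ_apply]; simp

lemma Φσ (a b c : ℤ) :
    Φ (σ (ofAdd (a, b, c))) =
      inl (ofAdd ((1:ℤ),(0:ℤ)) ^ a * ofAdd ((0:ℤ),(1:ℤ)) ^ c) * inr (ofAdd (2 * b)) := by
  rw [σ_apply, map_mul, map_mul, map_zpow, map_zpow, map_zpow, Φg, Φf]
  have hΦh2 : Φ (KleinST.h ^ 2) ^ b = inr (ofAdd (2 * b)) := by
    rw [map_pow, Φh, ← map_pow (inr : Multiplicative ℤ →* GG),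
      ← map_zpow (inr : Multiplicative ℤ →* GG)]
    congr 1
    rw [Int.ofAdd_mul]
    congr 1
  rw [hΦh2]
  have comm : inr (ofAdd (2 * b)) * ((inl (ofAdd ((0:ℤ),(1:ℤ)))) ^ c : GG)
      = ((inl (ofAdd ((0:ℤ),(1:ℤ)))) ^ c : GG) * inr (ofAdd (2 * b)) := by
    rw [← map_zpow (inl : Z2 →* GG)]
    have h1 := inl_aut (φ := φAct) (ofAdd (2 * b)) (ofAdd ((0:ℤ),(1:ℤ)) ^ c)
    rw [φAct_even] at h1
    have h2 : (inl (ofAdd ((0:ℤ),(1:ℤ)) ^ c) : GG) * inr (ofAdd (2 * b))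
        = inr (ofAdd (2 * b)) * inl (ofAdd ((0:ℤ),(1:ℤ)) ^ c) := by
      conv_lhs => rw [h1]
      rw [mul_assoc, mul_assoc, ← map_mul (inr : Multiplicative ℤ →* GG), inv_mul_cancel, map_one, mul_one]
    exact h2.symm
  rw [comm, ← mul_assoc, ← map_zpow (inl : Z2 →* GG), ← map_zpow (inl : Z2 →* GG), ← map_mul (inl : Z2 →* GG)]

lemma σ_inj : Function.Injective σ := by
  rw [injective_iff_map_eq_one]
  intro x hx
  obtain ⟨⟨a, b, c⟩, rfl⟩ : ∃ p, x = ofAdd p := ⟨toAdd x, rfl⟩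
  have h0 := congrArg Φ hx
  rw [Φσ, map_one] at h0
  have hb : b = 0 := by
    have h1 := congrArg SemidirectProduct.rightHom h0
    rw [map_mul, rightHom_inl, rightHom_inr, one_mul, map_one] at h1
    have := congrArg toAdd h1
    simp only [toAdd_ofAdd, toAdd_one] at this
    omega
  have hac : ofAdd ((1:ℤ),(0:ℤ)) ^ a * ofAdd ((0:ℤ),(1:ℤ)) ^ c = (1 : Z2) := by
    have h1 := congrArg SemidirectProduct.left h0
    simp only [SemidirectProduct.mul_left, SemidirectProduct.left_inl,
      SemidirectProduct.left_inr, SemidirectProduct.right_inl, map_one, MulAut.one_apply,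
      mul_one, SemidirectProduct.one_left] at h1
    exact h1
  have hac2 : ofAdd ((a:ℤ), (c:ℤ)) = (1 : Z2) := by
    rw [← hac, ← ofAdd_zsmul, ← ofAdd_zsmul, ← ofAdd_add]
    congr 1
    simp [Prod.ext_iff]
  have h2 := congrArg toAdd hac2
  simp only [toAdd_ofAdd, toAdd_one, Prod.ext_iff] at h2
  obtain ⟨ha, hc⟩ := h2
  rw [ha, hb, hc]
  rfl

lemma closure_Z3 :
    Subgroup.closure {ofAdd ((1:ℤ),(0:ℤ),(0:ℤ)), ofAdd ((0:ℤ),(1:ℤ),(0:ℤ)),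
      ofAdd ((0:ℤ),(0:ℤ),(1:ℤ))} = (⊤ : Subgroup (Multiplicative (ℤ × ℤ × ℤ))) := by
  rw [eq_top_iff]
  rintro x -
  obtain ⟨⟨a, b, c⟩, rfl⟩ : ∃ p, x = ofAdd p := ⟨toAdd x, rfl⟩
  have hx : ofAdd ((a, b, c) : ℤ × ℤ × ℤ) =
      ofAdd ((1:ℤ),(0:ℤ),(0:ℤ)) ^ a *
        (ofAdd ((0:ℤ),(1:ℤ),(0:ℤ)) ^ b * ofAdd ((0:ℤ),(0:ℤ),(1:ℤ)) ^ c) := by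
    rw [← ofAdd_zsmul, ← ofAdd_zsmul, ← ofAdd_zsmul, ← ofAdd_add, ← ofAdd_add]
    congr 1
    simp [Prod.ext_iff]
  rw [hx]
  refine mul_mem (Subgroup.zpow_mem _ (Subgroup.subset_closure (by simp)) _)
    (mul_mem (Subgroup.zpow_mem _ (Subgroup.subset_closure (by simp)) _)
      (Subgroup.zpow_mem _ (Subgroup.subset_closure (by simp)) _))

lemma σ_range : MonoidHom.range σ = Subgroup.closure {KleinST.g, KleinST.h ^ 2, KleinST.f} := by
  rw [MonoidHom.range_eq_map, ← closure_Z3, MonoidHom.map_closure]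
  congr 1
  rw [Set.image_insert_eq, Set.image_insert_eq, Set.image_singleton, σ_e1, σ_e2, σ_e3]

end KleinSTAux

/-- In `Γ = ⟨g, h, f | h g h⁻¹ = g⁻¹, h f h⁻¹ = f⁻¹, g f = f g⟩` the subgroup generated by
`{g, h ^ 2, f}` is isomorphic to `ℤ × ℤ × ℤ` (the free abelian group of rank 3). -/
theorem kleinST_closure_isomorphic_Z3 :
    Nonempty ((Subgroup.closure {KleinST.g, KleinST.h ^ 2, KleinST.f} : Subgroup KleinST) ≃*
      Multiplicative (ℤ × ℤ × ℤ)) := by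
  exact ⟨(MulEquiv.subgroupCongr KleinSTAux.σ_range.symm).trans
    (MonoidHom.ofInjective KleinSTAux.σ_inj).symm⟩
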